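/- arXiv:2002.05969 — 3 statements merged into one kernel-verified Lean document; each statement's English description precedes it below -/
import Mathlib

section
/- Suppose the embedding method models all unions of A₁,…,A_M (i.e., for every S ⊆ {1,…,M} there exists q ∈ Ξ with dist(emb(w), q) ≤ β ⟺ w ∈ ⋃_{i∈S} Aᵢ, for all w ∈ V). Then the family of threshold sets 𝒞 = { {x ∈ ℝ^d : dist(x, q) ≤ β} : q ∈ Ξ } shatters some set of M points of ℝ^d; in particular, the VC dimension of 𝒞 is at least M. -/
/-- A family `𝒞` of subsets of `X` shatters a set `T ⊆ X` if for every `U ⊆ T`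
there exists `C ∈ 𝒞` with `C ∩ T = U`. -/
def Shatters {X : Type*} (𝒞 : Set (Set X)) (T : Set X) : Prop :=
  ∀ U ⊆ T, ∃ C ∈ 𝒞, C ∩ T = U

theorem stmt_0 {V Q : Type*} {d M : ℕ} (hd : 0 < d) (hM : 0 < M)
    (emb : V → (Fin d → ℝ)) (Ξ : Set Q) (dist : (Fin d → ℝ) → Q → ℝ) (β : ℝ)
    (A : Fin M → Set V) (hne : ∀ i, (A i).Nonempty)
    (hdisj : ∀ i j, i ≠ j → Disjoint (A i) (A j))
    (hmodel : ∀ S : Set (Fin M), ∃ q ∈ Ξ,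
      ∀ w : V, dist (emb w) q ≤ β ↔ w ∈ ⋃ i ∈ S, A i) :
    ∃ T : Set (Fin d → ℝ), T.Finite ∧ T.ncard = M ∧
      Shatters {C | ∃ q ∈ Ξ, C = {x | dist x q ≤ β}} T := by
  choose v hv using hne
  -- key: membership characterization
  have key : ∀ (S : Set (Fin M)) (j : Fin M), (v j ∈ ⋃ i ∈ S, A i) ↔ j ∈ S := by
    intro S j
    constructor
    · rintro h
      simp only [Set.mem_iUnion] at h
      obtain ⟨i, hiS, hvi⟩ := h
      rcases eq_or_ne i j with rfl | hne'
      · exact hiS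
      · exact absurd (hv j) (Set.disjoint_left.mp (hdisj i j hne') hvi)
    · intro hj
      exact Set.mem_biUnion hj (hv j)
  have hinj : Function.Injective (fun i => emb (v i)) := by
    intro i j hij
    by_contra hne'
    obtain ⟨q, _, hq⟩ := hmodel {i}
    have h1 : dist (emb (v i)) q ≤ β := (hq (v i)).mpr ((key {i} i).mpr rfl)
    have hij' : emb (v i) = emb (v j) := hij
    rw [hij'] at h1
    have h2 := (key {i} j).mp ((hq (v j)).mp h1)
    exact hne' h2.symm
  refine ⟨Set.range (fun i => emb (v i)), Set.finite_range _, ?_, ?_⟩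
  · rw [← Nat.card_coe_set_eq, Nat.card_range_of_injective hinj,
      Nat.card_eq_fintype_card, Fintype.card_fin]
  · intro U hU
    set S : Set (Fin M) := {i | emb (v i) ∈ U} with hS
    obtain ⟨q, hqΞ, hq⟩ := hmodel S
    refine ⟨{x | dist x q ≤ β}, ⟨q, hqΞ, rfl⟩, ?_⟩
    ext x
    constructor
    · rintro ⟨hx, j, rfl⟩
      exact (key S j).mp ((hq (v j)).mp hx)
    · intro hx
      obtain ⟨j, rfl⟩ := hU hx
      exact ⟨(hq (v j)).mpr ((key S j).mpr hx), ⟨j, rfl⟩⟩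
end

section
/- Suppose the embedding method models all unions of A₁,…,A_M, and suppose additionally that every threshold set { x ∈ ℝ^d : dist(x, q) ≤ β }, for q ∈ Ξ, is an axis-aligned box in ℝ^d (a set of the form { x : a ⪯ x ⪯ b }). Then M ≤ 2d. In particular, to model all unions of M conjunctive queries with disjoint nonempty denotation sets using box-shaped threshold sets, the embedding dimension d must be at least M/2, i.e., linear in M. -/
theorem stmt_14 {V Q : Type*} {d M : ℕ} (hd : 0 < d) (hM : 0 < M)
    (emb : V → (Fin d → ℝ)) (Ξ : Set Q) (dist : (Fin d → ℝ) → Q → ℝ) (β : ℝ)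
    (A : Fin M → Set V) (hne : ∀ i, (A i).Nonempty)
    (hdisj : ∀ i j, i ≠ j → Disjoint (A i) (A j))
    (hmodel : ∀ S : Set (Fin M), ∃ q ∈ Ξ,
      ∀ w : V, dist (emb w) q ≤ β ↔ w ∈ ⋃ i ∈ S, A i)
    (hbox : ∀ q ∈ Ξ, ∃ a b : Fin d → ℝ,
      {x : Fin d → ℝ | dist x q ≤ β} = {x | a ≤ x ∧ x ≤ b}) :
    M ≤ 2 * d := by
  classical
  choose v hv using hne
  set x : Fin M → (Fin d → ℝ) := fun i => emb (v i) with hx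
  have key : ∀ i : Fin M, ∃ k : Fin d,
      (∀ j, j ≠ i → x i k < x j k) ∨ (∀ j, j ≠ i → x j k < x i k) := by
    intro i
    obtain ⟨q, hqΞ, hq⟩ := hmodel {i}ᶜ
    obtain ⟨a, b, hab⟩ := hbox q hqΞ
    have hmem : ∀ j, j ≠ i → a ≤ x j ∧ x j ≤ b := by
      intro j hj
      have hju : v j ∈ ⋃ i' ∈ ({i}ᶜ : Set (Fin M)), A i' :=
        Set.mem_biUnion (Set.mem_compl_singleton_iff.mpr hj) (hv j)
      have hd' : dist (x j) q ≤ β := (hq (v j)).2 hju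
      exact (Set.ext_iff.mp hab (x j)).mp hd'
    have hnot : ¬ (a ≤ x i ∧ x i ≤ b) := by
      intro h
      have h1 : dist (x i) q ≤ β := (Set.ext_iff.mp hab (x i)).mpr h
      have h2 := (hq (v i)).1 h1
      rw [Set.mem_iUnion₂] at h2
      obtain ⟨j, hj, hm⟩ := h2
      have hji : j ≠ i := Set.mem_compl_singleton_iff.mp hj
      exact Set.disjoint_left.mp (hdisj j i hji) hm (hv i)
    rcases not_and_or.mp hnot with h | h
    · obtain ⟨k, hk⟩ := not_forall.mp (fun hall => h (fun k => hall k))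
      exact ⟨k, Or.inl (fun j hj => (lt_of_not_ge hk).trans_le ((hmem j hj).1 k))⟩
    · obtain ⟨k, hk⟩ := not_forall.mp (fun hall => h (fun k => hall k))
      exact ⟨k, Or.inr (fun j hj => ((hmem j hj).2 k).trans_lt (lt_of_not_ge hk))⟩
  choose k hk using key
  let f : Fin M → Fin d × Bool := fun i =>
    (k i, if ∀ j, j ≠ i → x i (k i) < x j (k i) then true else false)
  have hinj : Function.Injective f := by
    intro i i' hii'
    by_contra hne'
    have hki : k i = k i' := (Prod.ext_iff.mp hii').1
    have hb := (Prod.ext_iff.mp hii').2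
    simp only [f] at hb
    rcases hk i with hi | hi <;> rcases hk i' with hi' | hi'
    · have h1 := hi i' (Ne.symm hne')
      have h2 := hi' i hne'
      rw [hki] at h1
      exact absurd h2 (not_lt.mpr h1.le)
    · rw [if_pos hi, if_neg] at hb
      · exact Bool.noConfusion hb
      · intro hall
        exact absurd (hi' i hne') (not_lt.mpr (hall i hne').le)
    · rw [if_neg, if_pos hi'] at hb
      · exact Bool.noConfusion hb
      · intro hall
        exact absurd (hi i' (Ne.symm hne')) (not_lt.mpr (hall i' (Ne.symm hne')).le)
    · have h1 := hi i' (Ne.symm hne')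
      have h2 := hi' i hne'
      rw [hki] at h1
      exact absurd h2 (not_lt.mpr h1.le)
  have := Fintype.card_le_of_injective f hinj
  simpa [Fintype.card_prod, mul_comm] using this
end

section
/- Suppose the embedding method models all unions of A₁,…,A_M, and suppose additionally that every threshold set { x ∈ ℝ^d : dist(x, q) ≤ β }, for q ∈ Ξ, is a closed half-space { x : ⟨a, x⟩ ≤ b } of ℝ^d. Then M ≤ d + 1. In particular, to model all unions of M conjunctive queries with disjoint nonempty denotation sets using hyperplane-based threshold sets, the embedding dimension d must be at least M − 1, i.e., linear in M. -/
theorem stmt_16 {V Q : Type*} {d M : ℕ} (hd : 0 < d) (hM : 0 < M)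
    (emb : V → (Fin d → ℝ)) (Ξ : Set Q) (dist : (Fin d → ℝ) → Q → ℝ) (β : ℝ)
    (A : Fin M → Set V) (hne : ∀ i, (A i).Nonempty)
    (hdisj : ∀ i j, i ≠ j → Disjoint (A i) (A j))
    (hmodel : ∀ S : Set (Fin M), ∃ q ∈ Ξ,
      ∀ w : V, dist (emb w) q ≤ β ↔ w ∈ ⋃ i ∈ S, A i)
    (hhalf : ∀ q ∈ Ξ, ∃ (a : Fin d → ℝ) (b : ℝ),
      {x : Fin d → ℝ | dist x q ≤ β} = {x | ∑ i, a i * x i ≤ b}) :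
    M ≤ d + 1 := by
  by_contra hlt
  push_neg at hlt
  -- pick a representative in each A i
  choose v hv using hne
  set x : Fin M → (Fin d → ℝ) := fun i => emb (v i) with hx
  -- x is not affinely independent
  have hnotai : ¬ AffineIndependent ℝ x := by
    intro hai
    have hcard := hai.card_le_finrank_succ
    have hle : Module.finrank ℝ (vectorSpan ℝ (Set.range x)) ≤
        Module.finrank ℝ (Fin d → ℝ) :=
      Submodule.finrank_le _
    simp only [Fintype.card_fin, Module.finrank_fintype_fun_eq_card] at hcard hle
    omega
  obtain ⟨I, p, hpI, hpIc⟩ := Convex.radon_partition hnotai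
  obtain ⟨q, hqΞ, hq⟩ := hmodel I
  obtain ⟨a, b, hab⟩ := hhalf q hqΞ
  set f : (Fin d → ℝ) → ℝ := fun y => ∑ i, a i * y i with hf
  have hflin : IsLinearMap ℝ f := by
    constructor
    · intro y z
      simp [hf, mul_add, Finset.sum_add_distrib]
    · intro c y
      simp only [hf, Pi.smul_apply, smul_eq_mul, Finset.mul_sum]
      exact Finset.sum_congr rfl (fun i _ => by ring)
  -- membership criterion
  have hmem : ∀ i : Fin M, f (x i) ≤ b ↔ i ∈ I := by
    intro i
    have h1 : f (x i) ≤ b ↔ dist (x i) q ≤ β := (Set.ext_iff.mp hab (x i)).symm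
    rw [h1, hq (v i)]
    constructor
    · rintro hmem'
      simp only [Set.mem_iUnion] at hmem'
      obtain ⟨j, hjI, hvj⟩ := hmem'
      by_cases hij : i = j
      · exact hij ▸ hjI
      · exact absurd (hdisj i j hij) (Set.not_disjoint_iff.2 ⟨v i, hv i, hvj⟩)
    · intro hiI
      exact Set.mem_biUnion hiI (hv i)
  -- p is in the closed halfspace
  have hp1 : f p ≤ b := by
    have hsub : x '' I ⊆ {y | f y ≤ b} := by
      rintro _ ⟨i, hiI, rfl⟩
      exact (hmem i).2 hiI
    have := convexHull_min hsub (convex_halfSpace_le hflin b)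
    exact this hpI
  -- p is in the open complementary halfspace
  have hp2 : b < f p := by
    have hsub : x '' Iᶜ ⊆ {y | b < f y} := by
      rintro _ ⟨i, hiI, rfl⟩
      have : ¬ f (x i) ≤ b := fun h => hiI ((hmem i).1 h)
      exact not_le.mp this
    have := convexHull_min hsub (convex_halfSpace_gt hflin b)
    exact this hpIc
  linarith
end
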